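/- Let G be a group and S a T_s-set of sequences in G with finest topology τ_S. Let S(G, τ_S) denote the set of all sequences in G converging to the identity in τ_S. Then τ_S = τ_{S(G,τ_S)}, i.e., the finest Hausdorff group topology in which all sequences of S(G,τ_S) converge to the identity equals τ_S. -/

import Mathlib

open Filter Topology Pointwise

/-- `u` converges to the identity in the group topology `t`. -/
def TendstoOne {G : Type*} [Group G] (t : GroupTopology G) (u : ℕ → G) : Prop :=
  Filter.Tendsto u Filter.atTop (@nhds G t.toTopologicalSpace 1)

/-- The group topology `t` is Hausdorff. -/
def IsHausdorffGT {G : Type*} [Group G] (t : GroupTopology G) : Prop :=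
  @T2Space G t.toTopologicalSpace

/-- `S` is a `T_s`-set of sequences: some Hausdorff group topology makes every
sequence of `S` converge to the identity. -/
def IsTsSet {G : Type*} [Group G] (S : Set (ℕ → G)) : Prop :=
  ∃ t : GroupTopology G, IsHausdorffGT t ∧ ∀ u ∈ S, TendstoOne t u

/-- `τ` is the finest Hausdorff group topology on `G` in which every sequence of `S`
converges to the identity (recall that in Mathlib's order on topologies, finer = smaller). -/
def IsTauS {G : Type*} [Group G] (S : Set (ℕ → G)) (τ : GroupTopology G) : Prop :=
  IsHausdorffGT τ ∧ (∀ u ∈ S, TendstoOne τ u) ∧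
    ∀ t : GroupTopology G, IsHausdorffGT t → (∀ u ∈ S, TendstoOne t u) → τ ≤ t

/-- The given topological-group structure on `G`, as a term of `GroupTopology G`. -/
def ambientGT (G : Type*) [Group G] [τ : TopologicalSpace G] [h : IsTopologicalGroup G] :
    GroupTopology G := ⟨τ, h⟩

/-- The set of all sequences converging to the identity in a group topology. -/
def SeqConvOne {G : Type*} [Group G] (t : GroupTopology G) : Set (ℕ → G) :=
  {u | TendstoOne t u}

/-- `(G, τ)` is an `s`-group: its topology is the finest Hausdorff group topology in which
every member of some `T_s`-set of sequences converges to the identity. -/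
def IsSGroup (G : Type*) [Group G] [TopologicalSpace G] [IsTopologicalGroup G] [T2Space G] :
    Prop :=
  ∃ S : Set (ℕ → G), IsTauS S (ambientGT G)

/-- if `τ_S` is the finest Hausdorff group topology for a `T_s`-set `S`, and `τ'`
is the finest Hausdorff group topology in which every sequence converging to the identity in
`τ_S` converges to the identity, then `τ' = τ_S`; i.e. `τ_S = τ_{S(G, τ_S)}`. -/
theorem stmt5 {G : Type*} [Group G] (S : Set (ℕ → G)) (τS : GroupTopology G)
    (hτS : IsTauS S τS) (τ' : GroupTopology G) (hτ' : IsTauS (SeqConvOne τS) τ') :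
    τ' = τS := by
  have h1 : τ' ≤ τS := hτ'.2.2 τS hτS.1 (fun u hu => hu)
  have h2 : τS ≤ τ' := hτS.2.2 τ' hτ'.1 (fun u hu => hτ'.2.1 u (hτS.2.1 u hu))
  exact le_antisymm h1 h2
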